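/- For n ≥ 2, let B_n be the braid group on n strands, i.e., the group presented by generators σ₁, …, σ_{n−1} subject to the relations σᵢσⱼ = σⱼσᵢ whenever |i − j| > 1 and σᵢσⱼσᵢ = σⱼσᵢσⱼ whenever |i − j| = 1. Then the genuine circular orderings are dense in the space of circular orderings of B_n: the closure of CO_g(B_n) in CO(B_n) equals CO(B_n). -/

import Mathlib

namespace Paper

variable {G : Type*} [Group G]

/-- A left-invariant circular ordering of a group `G`, as a function `G³ → {0, ±1} ⊆ ℤ`. -/
def IsCircOrd (c : G → G → G → ℤ) : Prop :=
  (∀ g₁ g₂ g₃ : G, c g₁ g₂ g₃ = 0 ↔ (g₁ = g₂ ∨ g₁ = g₃ ∨ g₂ = g₃)) ∧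
  (∀ g₁ g₂ g₃ : G, c g₁ g₂ g₃ = 0 ∨ c g₁ g₂ g₃ = 1 ∨ c g₁ g₂ g₃ = -1) ∧
  (∀ g₁ g₂ g₃ g₄ : G, c g₂ g₃ g₄ - c g₁ g₃ g₄ + c g₁ g₂ g₄ - c g₁ g₂ g₃ = 0) ∧
  (∀ g g₁ g₂ g₃ : G, c (g*g₁) (g*g₂) (g*g₃) = c g₁ g₂ g₃)

/-- The space CO(G) of circular orderings, topologized as a subspace of `ℤ^{G³}`
(all relevant values lie in the discrete set `{0,±1}`, and `ℤ` carries the discrete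
topology, so this is the subspace topology from the product topology on `{0,±1}^{G³}`). -/
abbrev CircOrd (G : Type*) [Group G] := {c : G → G → G → ℤ // IsCircOrd c}

open Classical in
/-- The cocycle `f_c`: `f_c(g,h) = 0` if `g = 1` or `h = 1` or `c(1,g,gh) = 1`,
and `f_c(g,h) = 1` otherwise (i.e. when `gh = 1 ≠ g`, or `c(1,gh,g) = 1`). -/
noncomputable def fc (c : G → G → G → ℤ) (g h : G) : ℤ :=
  if g = 1 ∨ h = 1 ∨ c 1 g (g*h) = 1 then 0 else 1

/-- Multiplication in the central extension `G̃_c = G × ℤ`: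
`(g,n)(h,m) = (gh, n+m+f_c(g,h))`. -/
noncomputable def liftMul (c : G → G → G → ℤ) (x y : G × ℤ) : G × ℤ :=
  (x.1 * y.1, x.2 + y.2 + fc c x.1 y.1)

/-- Powers (with natural number exponents) in `G̃_c`. -/
noncomputable def liftPow (c : G → G → G → ℤ) (x : G × ℤ) : ℕ → G × ℤ
  | 0 => (1, 0)
  | n+1 => liftMul c (liftPow c x n) x

/-- `[h]_c`: the unique integer `k` with `z_c^k ≤_c h <_c z_c^{k+1}`, where `<_c` is the
left-ordering of `G̃_c` with positive cone `{(g,n) : n ≥ 0} ∖ {(1,0)}` and `z_c = (1,1)`.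
Since `z_c^k = (1,k)` and `f_c(g,g⁻¹) = 1` for `g ≠ 1`, this is exactly the second
coordinate of `h`. -/
def liftFloor (h : G × ℤ) : ℤ := h.2

/-- The translation number `r̃ot_c(h)` of `h ∈ G̃_c`: the limit of `[hⁿ]_c / n`
(`limUnder` picks out the limit when it exists). -/
noncomputable def rotTilde (c : G → G → G → ℤ) (h : G × ℤ) : ℝ :=
  Filter.limUnder Filter.atTop (fun n : ℕ => (liftFloor (liftPow c h n) : ℝ) / (n : ℝ))

/-- The rotation number `rot_c(g) ∈ ℝ/ℤ`, computed using the lift `(g,0) ∈ G̃_c`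
(it is independent of the choice of lift). -/
noncomputable def rotc (c : G → G → G → ℤ) (g : G) : AddCircle (1:ℝ) :=
  ((rotTilde c (g, 0) : ℝ) : AddCircle (1:ℝ))

/-- `τ_c(g,h) = r̃ot_c(g̃h̃) − r̃ot_c(g̃) − r̃ot_c(h̃)`, computed using the lifts `(g,0)`
and `(h,0)` (it is independent of the choice of lifts). -/
noncomputable def tauc (c : G → G → G → ℤ) (g h : G) : ℝ :=
  rotTilde c (liftMul c (g,0) (h,0)) - rotTilde c (g,0) - rotTilde c (h,0)

/-- A positive cone of a group `G`: `P · P ⊆ P` and `P ∪ P⁻¹ = G ∖ {1}`.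
It determines a left-ordering by `g < h` iff `g⁻¹h ∈ P`. -/
def IsPositiveCone (P : Set G) : Prop :=
  (∀ a ∈ P, ∀ b ∈ P, a * b ∈ P) ∧ (P ∪ P⁻¹ = {g : G | g ≠ 1})

/-- The left-ordering determined by a positive cone. -/
def coneLt (P : Set G) (a b : G) : Prop := a⁻¹ * b ∈ P

open Classical in
/-- The secret left-ordering `c_<` determined by a positive cone `P`:
`c_<(a,b,c) = sign σ` where `σ` is the permutation sorting `(a,b,c)` into increasing
order, i.e. `c_< = 1` on positively cyclically ordered triples, `-1` on negatively
cyclically ordered triples, and `0` when the entries are not all distinct. -/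
noncomputable def circOfCone (P : Set G) : G → G → G → ℤ := fun a b c =>
  if (coneLt P a b ∧ coneLt P b c) ∨ (coneLt P b c ∧ coneLt P c a) ∨
      (coneLt P c a ∧ coneLt P a b) then 1
  else if (coneLt P c b ∧ coneLt P b a) ∨ (coneLt P b a ∧ coneLt P a c) ∨
      (coneLt P a c ∧ coneLt P c b) then -1
  else 0

/-- A circular ordering is a *secret left-ordering* if it is `c_<` for some
left-ordering `<` of `G`. -/
def IsSecret (c : G → G → G → ℤ) : Prop := ∃ P : Set G, IsPositiveCone P ∧ c = circOfCone P

/-- The braid relators on `m` generators `σ₀, …, σ_{m-1}`: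
`σᵢσⱼσᵢ⁻¹σⱼ⁻¹` for `|i − j| > 1` and `σᵢσⱼσᵢ(σⱼσᵢσⱼ)⁻¹` for `|i − j| = 1`. -/
def braidRels (m : ℕ) : Set (FreeGroup (Fin m)) :=
  {r | ∃ i j : Fin m, ((i : ℕ) + 1 < (j : ℕ) ∨ (j : ℕ) + 1 < (i : ℕ)) ∧
        r = FreeGroup.of i * FreeGroup.of j * (FreeGroup.of i)⁻¹ * (FreeGroup.of j)⁻¹} ∪
  {r | ∃ i j : Fin m, ((i : ℕ) + 1 = (j : ℕ) ∨ (j : ℕ) + 1 = (i : ℕ)) ∧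
        r = FreeGroup.of i * FreeGroup.of j * FreeGroup.of i *
            (FreeGroup.of j * FreeGroup.of i * FreeGroup.of j)⁻¹}

/-- The braid group `B_n` on `n` strands, presented by the generators `σ₁, …, σ_{n−1}`
and the braid relations. -/
abbrev BraidGroup (n : ℕ) : Type := PresentedGroup (braidRels (n - 1))

section Cyc
variable {X : Type*}

open Classical in
/-- cyclification of a binary relation -/
noncomputable def cyc (r : X → X → Prop) (a b c : X) : ℤ :=
  if (r a b ∧ r b c) ∨ (r b c ∧ r c a) ∨ (r c a ∧ r a b) then 1
  else if (r c b ∧ r b a) ∨ (r b a ∧ r a c) ∨ (r a c ∧ r c b) then -1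
  else 0

theorem cyc_congr {r r' : X → X → Prop} {a b c : X}
    (h1 : r a b ↔ r' a b) (h2 : r b c ↔ r' b c) (h3 : r c a ↔ r' c a)
    (h4 : r c b ↔ r' c b) (h5 : r b a ↔ r' b a) (h6 : r a c ↔ r' a c) :
    cyc r a b c = cyc r' a b c := by
  unfold cyc
  rw [iff_iff_eq] at h1 h2 h3 h4 h5 h6
  rw [h1, h2, h3, h4, h5, h6]

def cycF (x y z : Fin 4) : ℤ :=
  if (x < y ∧ y < z) ∨ (y < z ∧ z < x) ∨ (z < x ∧ x < y) then 1
  else if (z < y ∧ y < x) ∨ (y < x ∧ x < z) ∨ (x < z ∧ z < y) then -1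
  else 0

theorem cycF_cocycle : ∀ a b c d : Fin 4,
    cycF b c d - cycF a c d + cycF a b d - cycF a b c = 0 := by decide

theorem cycF_zero_iff : ∀ a b c : Fin 4, (cycF a b c = 0 ↔ (a = b ∨ a = c ∨ b = c)) := by decide

structure STotal (r : X → X → Prop) : Prop where
  irrefl : ∀ a, ¬ r a a
  trans : ∀ a b c, r a b → r b c → r a c
  total : ∀ a b, a ≠ b → r a b ∨ r b a

theorem STotal.asymm {r : X → X → Prop} (h : STotal r) {a b : X} (hab : r a b) : ¬ r b a :=
  fun h' => h.irrefl a (h.trans a b a hab h')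

theorem STotal.lt_ne {r : X → X → Prop} (h : STotal r) {a b : X} (hab : r a b) : a ≠ b := by
  rintro rfl; exact h.irrefl a hab

open Classical in
noncomputable def rk (r : X → X → Prop) (a b c d x : X) : ℤ :=
  (if r a x then 1 else 0) + (if r b x then 1 else 0) +
  (if r c x then 1 else 0) + (if r d x then 1 else 0)

theorem rk_nonneg {r : X → X → Prop} (a b c d x : X) : 0 ≤ rk r a b c d x := by
  classical
  unfold rk
  split_ifs <;> omega

theorem rk_le_three {r : X → X → Prop} (h : STotal r) {a b c d x : X}
    (hx : x = a ∨ x = b ∨ x = c ∨ x = d) : rk r a b c d x ≤ 3 := by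
  classical
  have hb : ∀ t : X, (if r t x then (1:ℤ) else 0) ≤ 1 := by
    intro t; split <;> omega
  have hterm : ∀ t : X, t = x → (if r t x then (1:ℤ) else 0) = 0 := by
    rintro t rfl; simp [h.irrefl t]
  have m1 := hb a; have m2 := hb b; have m3 := hb c; have m4 := hb d
  unfold rk
  rcases hx with hh | hh | hh | hh
  · have h0 := hterm a hh.symm; omega
  · have h0 := hterm b hh.symm; omega
  · have h0 := hterm c hh.symm; omega
  · have h0 := hterm d hh.symm; omega

theorem rk_lt {r : X → X → Prop} (h : STotal r) {a b c d x y : X}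
    (hx : x = a ∨ x = b ∨ x = c ∨ x = d) (hxy : r x y) :
    rk r a b c d x < rk r a b c d y := by
  classical
  have mono : ∀ t : X, (if r t x then (1:ℤ) else 0) ≤ (if r t y then 1 else 0) := by
    intro t
    by_cases h' : r t x
    · simp [h', h.trans t x y h' hxy]
    · simp only [h', if_false]
      split <;> norm_num
  have hterm : ∀ t : X, t = x →
      (if r t x then (1:ℤ) else 0) = 0 ∧ (if r t y then (1:ℤ) else 0) = 1 := by
    rintro t rfl
    exact ⟨by simp [h.irrefl t], by simp [hxy]⟩
  have m1 := mono a; have m2 := mono b; have m3 := mono c; have m4 := mono d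
  unfold rk
  rcases hx with hh | hh | hh | hh
  · have h0 := hterm a hh.symm; omega
  · have h0 := hterm b hh.symm; omega
  · have h0 := hterm c hh.symm; omega
  · have h0 := hterm d hh.symm; omega

theorem rk_lt_iff {r : X → X → Prop} (h : STotal r) {a b c d x y : X}
    (hx : x = a ∨ x = b ∨ x = c ∨ x = d) (hy : y = a ∨ y = b ∨ y = c ∨ y = d) :
    r x y ↔ rk r a b c d x < rk r a b c d y := by
  constructor
  · exact rk_lt h hx
  · intro hlt
    by_contra hr
    rcases eq_or_ne x y with rfl | hne
    · omega
    · rcases h.total x y hne with h' | h'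
      · exact hr h'
      · have := rk_lt h hy h'; omega

theorem rk_eq_iff {r : X → X → Prop} (h : STotal r) {a b c d x y : X}
    (hx : x = a ∨ x = b ∨ x = c ∨ x = d) (hy : y = a ∨ y = b ∨ y = c ∨ y = d) :
    x = y ↔ rk r a b c d x = rk r a b c d y := by
  constructor
  · rintro rfl; rfl
  · intro he
    by_contra hne
    rcases h.total x y hne with h' | h'
    · have := rk_lt h hx h'; omega
    · have := rk_lt h hy h'; omega

noncomputable def rkF (r : X → X → Prop) (a b c d x : X) : Fin 4 :=
  ⟨min (rk r a b c d x).toNat 3, by omega⟩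

theorem rkF_lt_iff {r : X → X → Prop} (h : STotal r) {a b c d x y : X}
    (hx : x = a ∨ x = b ∨ x = c ∨ x = d) (hy : y = a ∨ y = b ∨ y = c ∨ y = d) :
    r x y ↔ rkF r a b c d x < rkF r a b c d y := by
  have b1 := rk_nonneg (r := r) a b c d x
  have b2 := rk_nonneg (r := r) a b c d y
  have b3 := rk_le_three h hx
  have b4 := rk_le_three h hy
  rw [rk_lt_iff h hx hy]
  show _ ↔ min (rk r a b c d x).toNat 3 < min (rk r a b c d y).toNat 3
  omega

theorem rkF_eq_iff {r : X → X → Prop} (h : STotal r) {a b c d x y : X}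
    (hx : x = a ∨ x = b ∨ x = c ∨ x = d) (hy : y = a ∨ y = b ∨ y = c ∨ y = d) :
    x = y ↔ rkF r a b c d x = rkF r a b c d y := by
  have b1 := rk_nonneg (r := r) a b c d x
  have b2 := rk_nonneg (r := r) a b c d y
  have b3 := rk_le_three h hx
  have b4 := rk_le_three h hy
  rw [rk_eq_iff h hx hy, Fin.ext_iff]
  show _ ↔ min (rk r a b c d x).toNat 3 = min (rk r a b c d y).toNat 3
  omega

theorem cyc_eq_cycF {r : X → X → Prop} (h : STotal r) {a b c d x y z : X}
    (hx : x = a ∨ x = b ∨ x = c ∨ x = d) (hy : y = a ∨ y = b ∨ y = c ∨ y = d)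
    (hz : z = a ∨ z = b ∨ z = c ∨ z = d) :
    cyc r x y z = cycF (rkF r a b c d x) (rkF r a b c d y) (rkF r a b c d z) := by
  classical
  have h1 := rkF_lt_iff h hx hy
  have h2 := rkF_lt_iff h hy hz
  have h3 := rkF_lt_iff h hz hx
  have h4 := rkF_lt_iff h hz hy
  have h5 := rkF_lt_iff h hy hx
  have h6 := rkF_lt_iff h hx hz
  unfold cyc cycF
  rw [iff_iff_eq] at h1 h2 h3 h4 h5 h6
  rw [h1, h2, h3, h4, h5, h6]
  congr

theorem cyc_cocycle {r : X → X → Prop} (h : STotal r) (a b c d : X) :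
    cyc r b c d - cyc r a c d + cyc r a b d - cyc r a b c = 0 := by
  have e1 := cyc_eq_cycF h (a := a) (b := b) (c := c) (d := d)
    (Or.inr (Or.inl rfl)) (Or.inr (Or.inr (Or.inl rfl))) (Or.inr (Or.inr (Or.inr rfl)))
  have e2 := cyc_eq_cycF h (a := a) (b := b) (c := c) (d := d)
    (Or.inl rfl) (Or.inr (Or.inr (Or.inl rfl))) (Or.inr (Or.inr (Or.inr rfl)))
  have e3 := cyc_eq_cycF h (a := a) (b := b) (c := c) (d := d)
    (Or.inl rfl) (Or.inr (Or.inl rfl)) (Or.inr (Or.inr (Or.inr rfl)))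
  have e4 := cyc_eq_cycF h (a := a) (b := b) (c := c) (d := d)
    (Or.inl rfl) (Or.inr (Or.inl rfl)) (Or.inr (Or.inr (Or.inl rfl)))
  rw [e1, e2, e3, e4]
  exact cycF_cocycle _ _ _ _

theorem cyc_zero_iff {r : X → X → Prop} (h : STotal r) (a b c : X) :
    cyc r a b c = 0 ↔ (a = b ∨ a = c ∨ b = c) := by
  have e := cyc_eq_cycF h (a := a) (b := b) (c := c) (d := c)
    (Or.inl rfl) (Or.inr (Or.inl rfl)) (Or.inr (Or.inr (Or.inl rfl)))
  rw [e, cycF_zero_iff]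
  rw [← rkF_eq_iff h (d := c) (Or.inl rfl) (Or.inr (Or.inl rfl)),
    ← rkF_eq_iff h (d := c) (Or.inl rfl) (Or.inr (Or.inr (Or.inl rfl))),
    ← rkF_eq_iff h (d := c) (Or.inr (Or.inl rfl)) (Or.inr (Or.inr (Or.inl rfl)))]

theorem cyc_mem {r : X → X → Prop} (a b c : X) :
    cyc r a b c = 0 ∨ cyc r a b c = 1 ∨ cyc r a b c = -1 := by
  classical
  unfold cyc; split_ifs <;> omega


set_option maxHeartbeats 1600000 in
/-- cut invariance: if `U` is a final segment for `r` and `r'` puts `U` first,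
then the cyclifications agree. -/
theorem cyc_cut {X : Type*} {r : X → X → Prop} (h : STotal r) {U : Set X}
    (hU : ∀ u v, u ∈ U → r u v → v ∈ U)
    {r' : X → X → Prop}
    (hin : ∀ u v, u ∈ U → v ∈ U → (r' u v ↔ r u v))
    (hout : ∀ u v, u ∉ U → v ∉ U → (r' u v ↔ r u v))
    (hcT : ∀ u v, u ∈ U → v ∉ U → r' u v)
    (hcF : ∀ u v, u ∉ U → v ∈ U → ¬ r' u v)
    (a b c : X) : cyc r' a b c = cyc r a b c := by
  classical
  have key : ∀ u v, u ∈ U → v ∉ U → ¬ r u v ∧ r v u := by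
    intro u v hu hv
    have h1 : ¬ r u v := fun h' => hv (hU u v hu h')
    have h2 : u ≠ v := by rintro rfl; exact hv hu
    rcases h.total u v h2 with h' | h'
    · exact absurd h' h1
    · exact ⟨h1, h'⟩
  by_cases ha : a ∈ U <;> by_cases hb : b ∈ U <;> by_cases hc : c ∈ U
  · -- case TTT
    have E1 : r' a b = r a b := propext (hin a b ha hb)
    have E2 : r' b c = r b c := propext (hin b c hb hc)
    have E3 : r' c a = r c a := propext (hin c a hc ha)
    have E4 : r' c b = r c b := propext (hin c b hc hb)
    have E5 : r' b a = r b a := propext (hin b a hb ha)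
    have E6 : r' a c = r a c := propext (hin a c ha hc)
    unfold cyc
    rw [E1, E2, E3, E4, E5, E6]
  · -- case TTF
    have E1 : r' a b = r a b := propext (hin a b ha hb)
    have E2 : r' b c = True := propext (iff_true_intro (hcT b c hb hc))
    have E3 : r' c a = False := propext (iff_false_intro (hcF c a hc ha))
    have E4 : r' c b = False := propext (iff_false_intro (hcF c b hc hb))
    have E5 : r' b a = r b a := propext (hin b a hb ha)
    have E6 : r' a c = True := propext (iff_true_intro (hcT a c ha hc))
    obtain ⟨k1, k2⟩ := key a c ha hc
    obtain ⟨k3, k4⟩ := key b c hb hc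
    unfold cyc
    rw [E1, E2, E3, E4, E5, E6]
    clear E1 E2 E3 E4 E5 E6 hU hin hout hcT hcF key h ha hb hc
    split_ifs <;> tauto
  · -- case TFT
    have E1 : r' a b = True := propext (iff_true_intro (hcT a b ha hb))
    have E2 : r' b c = False := propext (iff_false_intro (hcF b c hb hc))
    have E3 : r' c a = r c a := propext (hin c a hc ha)
    have E4 : r' c b = True := propext (iff_true_intro (hcT c b hc hb))
    have E5 : r' b a = False := propext (iff_false_intro (hcF b a hb ha))
    have E6 : r' a c = r a c := propext (hin a c ha hc)
    obtain ⟨k1, k2⟩ := key a b ha hb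
    obtain ⟨k3, k4⟩ := key c b hc hb
    unfold cyc
    rw [E1, E2, E3, E4, E5, E6]
    clear E1 E2 E3 E4 E5 E6 hU hin hout hcT hcF key h ha hb hc
    split_ifs <;> tauto
  · -- case TFF
    have E1 : r' a b = True := propext (iff_true_intro (hcT a b ha hb))
    have E2 : r' b c = r b c := propext (hout b c hb hc)
    have E3 : r' c a = False := propext (iff_false_intro (hcF c a hc ha))
    have E4 : r' c b = r c b := propext (hout c b hc hb)
    have E5 : r' b a = False := propext (iff_false_intro (hcF b a hb ha))
    have E6 : r' a c = True := propext (iff_true_intro (hcT a c ha hc))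
    obtain ⟨k1, k2⟩ := key a b ha hb
    obtain ⟨k3, k4⟩ := key a c ha hc
    unfold cyc
    rw [E1, E2, E3, E4, E5, E6]
    clear E1 E2 E3 E4 E5 E6 hU hin hout hcT hcF key h ha hb hc
    split_ifs <;> tauto
  · -- case FTT
    have E1 : r' a b = False := propext (iff_false_intro (hcF a b ha hb))
    have E2 : r' b c = r b c := propext (hin b c hb hc)
    have E3 : r' c a = True := propext (iff_true_intro (hcT c a hc ha))
    have E4 : r' c b = r c b := propext (hin c b hc hb)
    have E5 : r' b a = True := propext (iff_true_intro (hcT b a hb ha))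
    have E6 : r' a c = False := propext (iff_false_intro (hcF a c ha hc))
    obtain ⟨k1, k2⟩ := key b a hb ha
    obtain ⟨k3, k4⟩ := key c a hc ha
    unfold cyc
    rw [E1, E2, E3, E4, E5, E6]
    clear E1 E2 E3 E4 E5 E6 hU hin hout hcT hcF key h ha hb hc
    split_ifs <;> tauto
  · -- case FTF
    have E1 : r' a b = False := propext (iff_false_intro (hcF a b ha hb))
    have E2 : r' b c = True := propext (iff_true_intro (hcT b c hb hc))
    have E3 : r' c a = r c a := propext (hout c a hc ha)
    have E4 : r' c b = False := propext (iff_false_intro (hcF c b hc hb))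
    have E5 : r' b a = True := propext (iff_true_intro (hcT b a hb ha))
    have E6 : r' a c = r a c := propext (hout a c ha hc)
    obtain ⟨k1, k2⟩ := key b a hb ha
    obtain ⟨k3, k4⟩ := key b c hb hc
    unfold cyc
    rw [E1, E2, E3, E4, E5, E6]
    clear E1 E2 E3 E4 E5 E6 hU hin hout hcT hcF key h ha hb hc
    split_ifs <;> tauto
  · -- case FFT
    have E1 : r' a b = r a b := propext (hout a b ha hb)
    have E2 : r' b c = False := propext (iff_false_intro (hcF b c hb hc))
    have E3 : r' c a = True := propext (iff_true_intro (hcT c a hc ha))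
    have E4 : r' c b = True := propext (iff_true_intro (hcT c b hc hb))
    have E5 : r' b a = r b a := propext (hout b a hb ha)
    have E6 : r' a c = False := propext (iff_false_intro (hcF a c ha hc))
    obtain ⟨k1, k2⟩ := key c a hc ha
    obtain ⟨k3, k4⟩ := key c b hc hb
    unfold cyc
    rw [E1, E2, E3, E4, E5, E6]
    clear E1 E2 E3 E4 E5 E6 hU hin hout hcT hcF key h ha hb hc
    split_ifs <;> tauto
  · -- case FFF
    have E1 : r' a b = r a b := propext (hout a b ha hb)
    have E2 : r' b c = r b c := propext (hout b c hb hc)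
    have E3 : r' c a = r c a := propext (hout c a hc ha)
    have E4 : r' c b = r c b := propext (hout c b hc hb)
    have E5 : r' b a = r b a := propext (hout b a hb ha)
    have E6 : r' a c = r a c := propext (hout a c ha hc)
    unfold cyc
    rw [E1, E2, E3, E4, E5, E6]

end Cyc

section ConeAPI
variable {G : Type*} [Group G]

theorem IsPositiveCone.one_not_mem {P : Set G} (hP : IsPositiveCone P) : (1:G) ∉ P := by
  intro h
  have h2 : (1:G) ∈ P ∪ P⁻¹ := Or.inl h
  rw [hP.2] at h2
  exact h2 rfl

theorem coneLt_irrefl {P : Set G} (hP : IsPositiveCone P) (a : G) : ¬ coneLt P a a := by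
  unfold coneLt
  rw [inv_mul_cancel]
  exact hP.one_not_mem

theorem coneLt_trans {P : Set G} (hP : IsPositiveCone P) {a b c : G}
    (h1 : coneLt P a b) (h2 : coneLt P b c) : coneLt P a c := by
  have h3 := hP.1 _ h1 _ h2
  have e : (a⁻¹ * b) * (b⁻¹ * c) = a⁻¹ * c := by group
  rwa [e] at h3

theorem coneLt_total {P : Set G} (hP : IsPositiveCone P) {a b : G} (h : a ≠ b) :
    coneLt P a b ∨ coneLt P b a := by
  have hne : a⁻¹ * b ≠ 1 := by
    intro h'
    exact h (by rw [← mul_one a, ← h', mul_inv_cancel_left])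
  have h2 : a⁻¹ * b ∈ P ∪ P⁻¹ := by rw [hP.2]; exact hne
  rcases h2 with h2 | h2
  · exact Or.inl h2
  · right
    have : (a⁻¹ * b)⁻¹ ∈ P := h2
    have e : (a⁻¹ * b)⁻¹ = b⁻¹ * a := by group
    rwa [e] at this

theorem cone_stotal {P : Set G} (hP : IsPositiveCone P) : STotal (coneLt P) where
  irrefl := coneLt_irrefl hP
  trans := fun _ _ _ => coneLt_trans hP
  total := fun _ _ => coneLt_total hP

theorem coneLt_asymm {P : Set G} (hP : IsPositiveCone P) {a b : G} (h : coneLt P a b) :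
    ¬ coneLt P b a := (cone_stotal hP).asymm h

theorem coneLt_ne {P : Set G} (hP : IsPositiveCone P) {a b : G} (h : coneLt P a b) :
    a ≠ b := (cone_stotal hP).lt_ne h

theorem coneLt_mul_left {P : Set G} (g : G) {a b : G} :
    coneLt P (g * a) (g * b) ↔ coneLt P a b := by
  unfold coneLt
  rw [show (g * a)⁻¹ * (g * b) = a⁻¹ * b by group]

/-- non-strict version of the cone order -/
def cle (P : Set G) (a b : G) : Prop := coneLt P a b ∨ a = b

theorem cle_refl {P : Set G} (a : G) : cle P a a := Or.inr rfl

theorem cle_of_lt {P : Set G} {a b : G} (h : coneLt P a b) : cle P a b := Or.inl h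

theorem cle_mul_left {P : Set G} (g : G) {a b : G} : cle P (g * a) (g * b) ↔ cle P a b := by
  unfold cle
  rw [coneLt_mul_left]
  constructor
  · rintro (h | h)
    · exact Or.inl h
    · exact Or.inr (mul_left_cancel h)
  · rintro (h | h)
    · exact Or.inl h
    · exact Or.inr (by rw [h])

theorem cle_trans {P : Set G} (hP : IsPositiveCone P) {a b c : G}
    (h1 : cle P a b) (h2 : cle P b c) : cle P a c := by
  rcases h1 with h1 | rfl
  · rcases h2 with h2 | rfl
    · exact Or.inl (coneLt_trans hP h1 h2)
    · exact Or.inl h1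
  · exact h2

theorem lt_of_le_of_lt' {P : Set G} (hP : IsPositiveCone P) {a b c : G}
    (h1 : cle P a b) (h2 : coneLt P b c) : coneLt P a c := by
  rcases h1 with h1 | rfl
  · exact coneLt_trans hP h1 h2
  · exact h2

theorem lt_of_lt_of_le' {P : Set G} (hP : IsPositiveCone P) {a b c : G}
    (h1 : coneLt P a b) (h2 : cle P b c) : coneLt P a c := by
  rcases h2 with h2 | rfl
  · exact coneLt_trans hP h1 h2
  · exact h1

theorem cle_of_not_lt {P : Set G} (hP : IsPositiveCone P) {a b : G} (h : ¬ coneLt P a b) :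
    cle P b a := by
  rcases eq_or_ne b a with rfl | hne
  · exact cle_refl b
  · rcases coneLt_total hP hne with h' | h'
    · exact Or.inl h'
    · exact absurd h' h

theorem not_lt_of_le' {P : Set G} (hP : IsPositiveCone P) {a b : G} (h : cle P a b) :
    ¬ coneLt P b a := by
  intro h'
  rcases h with h | rfl
  · exact coneLt_asymm hP h h'
  · exact coneLt_irrefl hP a h'

theorem cone_pow_mem {P : Set G} (hP : IsPositiveCone P) {w : G} (hw : w ∈ P) :
    ∀ s : ℕ, 1 ≤ s → w^s ∈ P := by
  intro s hs
  induction s with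
  | zero => omega
  | succ t ih =>
    rcases Nat.eq_or_lt_of_le hs with h | h
    · rw [← h, pow_one]; exact hw
    · have ht : 1 ≤ t := by omega
      rw [pow_succ]
      exact hP.1 _ (ih ht) _ hw

theorem cone_one_lt_pow {P : Set G} (hP : IsPositiveCone P) {w : G} (hw : coneLt P 1 w) :
    ∀ s : ℕ, 1 ≤ s → coneLt P 1 (w^s) := by
  intro s hs
  have hw' : w ∈ P := by
    have := hw; unfold coneLt at this; rwa [inv_one, one_mul] at this
  unfold coneLt
  rw [inv_one, one_mul]
  exact cone_pow_mem hP hw' s hs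

theorem cone_pow_lt_pow {P : Set G} (hP : IsPositiveCone P) {w : G} (hw : coneLt P 1 w)
    {i j : ℕ} (hij : i < j) : coneLt P (w^i) (w^j) := by
  have hw' : w ∈ P := by
    have := hw; unfold coneLt at this; rwa [inv_one, one_mul] at this
  obtain ⟨k, rfl⟩ : ∃ k, j = i + k := ⟨j - i, by omega⟩
  unfold coneLt
  rw [pow_add, inv_mul_cancel_left]
  exact cone_pow_mem hP hw' _ (by omega)

theorem cone_pow_lt_pow' {P : Set G} (hP : IsPositiveCone P) {w : G} (hw : coneLt P w 1)
    {i j : ℕ} (hij : i < j) : coneLt P (w^j) (w^i) := by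
  have hw' : w⁻¹ ∈ P := by
    have := hw; unfold coneLt at this; rwa [mul_one] at this
  obtain ⟨k, rfl⟩ : ∃ k, j = i + k := ⟨j - i, by omega⟩
  unfold coneLt
  rw [pow_add, mul_inv_rev, mul_assoc, inv_mul_cancel, mul_one, ← inv_pow]
  exact cone_pow_mem hP hw' _ (by omega)

theorem cone_zpow_mem {P : Set G} (hP : IsPositiveCone P) {Z : G} (hZ : Z ∈ P)
    {t : ℤ} (ht : 1 ≤ t) : Z^t ∈ P := by
  have e : Z^t = Z^(t.toNat) := by
    rw [← zpow_natCast, Int.toNat_of_nonneg (by omega)]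
  rw [e]
  exact cone_pow_mem hP hZ _ (by omega)

theorem cone_zpow_lt {P : Set G} (hP : IsPositiveCone P) {Z : G} (hZ : Z ∈ P)
    {a b : ℤ} (hab : a < b) : coneLt P (Z^a) (Z^b) := by
  unfold coneLt
  have e : (Z^a)⁻¹ * Z^b = Z^(b-a) := by
    rw [← zpow_neg, ← zpow_add]
    congr 1
    ring
  rw [e]
  exact cone_zpow_mem hP hZ (by omega)

theorem cone_zpow_lt_iff {P : Set G} (hP : IsPositiveCone P) {Z : G} (hZ : Z ∈ P) (hZ1 : Z ≠ 1)
    {a b : ℤ} : coneLt P (Z^a) (Z^b) ↔ a < b := by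
  constructor
  · intro h
    by_contra hab
    push_neg at hab
    rcases eq_or_lt_of_le hab with h' | h'
    · rw [h'] at h; exact coneLt_irrefl hP _ h
    · exact coneLt_asymm hP h (cone_zpow_lt hP hZ h')
  · exact cone_zpow_lt hP hZ

end ConeAPI

section Wrap
variable {G : Type*} [Group G]

/-- context: a positive cone with a central, positive, cofinal element `Z` -/
structure ConeCtx (P : Set G) (Z : G) : Prop where
  cone : IsPositiveCone P
  cen : ∀ g : G, Z * g = g * Z
  pos : Z ∈ P
  cof : ∀ g : G, ∃ s : ℕ, coneLt P g (Z^s)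

namespace ConeCtx
variable {P : Set G} {Z : G}

theorem zpow_comm (h : ConeCtx P Z) (t : ℤ) (g : G) : Z^t * g = g * Z^t :=
  ((show Commute Z g from h.cen g).zpow_left t)

theorem ne_one (h : ConeCtx P Z) : Z ≠ 1 := by
  intro h1
  exact h.cone.one_not_mem (h1 ▸ h.pos)

theorem lt_one_Z (h : ConeCtx P Z) : coneLt P 1 Z := by
  unfold coneLt
  rw [inv_one, one_mul]
  exact h.pos

theorem nu_exists (h : ConeCtx P Z) (g : G) :
    ∃ m : ℤ, cle P (Z^m) g ∧ ∀ m' : ℤ, cle P (Z^m') g → m' ≤ m := by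
  apply Int.exists_greatest_of_bdd
  · obtain ⟨s, hs⟩ := h.cof g
    refine ⟨(s : ℤ), fun m hm => ?_⟩
    by_contra hlt
    push_neg at hlt
    have h1 : coneLt P (Z^m) (Z^(s:ℤ)) :=
      lt_of_le_of_lt' h.cone hm (by rwa [zpow_natCast])
    rw [cone_zpow_lt_iff h.cone h.pos h.ne_one] at h1
    omega
  · obtain ⟨s, hs⟩ := h.cof g⁻¹
    refine ⟨-(s : ℤ), Or.inl ?_⟩
    unfold coneLt at hs ⊢
    rw [inv_inv, ← zpow_natCast Z s] at hs
    rw [zpow_neg, inv_inv]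
    rw [h.zpow_comm (s:ℤ) g]
    exact hs

end ConeCtx

open Classical in
/-- the "floor" of g with respect to powers of Z -/
noncomputable def nuF (P : Set G) (Z : G) (g : G) : ℤ :=
  if h : ∃ m : ℤ, cle P (Z^m) g ∧ ∀ m' : ℤ, cle P (Z^m') g → m' ≤ m then h.choose else 0

/-- the representative of g in the fundamental domain [1, Z) -/
noncomputable def rho (P : Set G) (Z : G) (g : G) : G := Z^(-(nuF P Z g)) * g

namespace ConeCtx
variable {P : Set G} {Z : G}

theorem nu_spec (h : ConeCtx P Z) (g : G) :
    cle P (Z^(nuF P Z g)) g ∧ ∀ m' : ℤ, cle P (Z^m') g → m' ≤ nuF P Z g := by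
  unfold nuF
  rw [dif_pos (h.nu_exists g)]
  exact (h.nu_exists g).choose_spec

theorem nu_le (h : ConeCtx P Z) (g : G) : cle P (Z^(nuF P Z g)) g := (h.nu_spec g).1

theorem nu_max (h : ConeCtx P Z) {g : G} {m : ℤ} (hm : cle P (Z^m) g) : m ≤ nuF P Z g :=
  (h.nu_spec g).2 m hm

theorem nu_lt_succ (h : ConeCtx P Z) (g : G) : coneLt P g (Z^(nuF P Z g + 1)) := by
  by_contra hc
  have := h.nu_max (cle_of_not_lt h.cone hc)
  omega

theorem nu_unique (h : ConeCtx P Z) {g : G} {m : ℤ}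
    (h1 : cle P (Z^m) g) (h2 : coneLt P g (Z^(m+1))) : nuF P Z g = m := by
  have ha := h.nu_max h1
  have hb : coneLt P (Z^(nuF P Z g)) (Z^(m+1)) := lt_of_le_of_lt' h.cone (h.nu_le g) h2
  rw [cone_zpow_lt_iff h.cone h.pos h.ne_one] at hb
  omega

theorem nu_zpow_mul (h : ConeCtx P Z) (j : ℤ) (g : G) :
    nuF P Z (Z^j * g) = j + nuF P Z g := by
  apply h.nu_unique
  · rw [zpow_add]
    rw [cle_mul_left]
    exact h.nu_le g
  · rw [show j + nuF P Z g + 1 = j + (nuF P Z g + 1) by ring, zpow_add, coneLt_mul_left]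
    exact h.nu_lt_succ g

theorem nu_interval (h : ConeCtx P Z) {g : G} (h1 : cle P 1 g) (h2 : coneLt P g Z) :
    nuF P Z g = 0 := by
  apply h.nu_unique
  · rwa [zpow_zero]
  · rwa [zero_add, zpow_one]

theorem rho_interval (h : ConeCtx P Z) {g : G} (h1 : cle P 1 g) (h2 : coneLt P g Z) :
    rho P Z g = g := by
  unfold rho
  rw [h.nu_interval h1 h2, neg_zero, zpow_zero, one_mul]

theorem rho_spec1 (h : ConeCtx P Z) (g : G) : cle P 1 (rho P Z g) := by
  have h2 : cle P (Z^(-(nuF P Z g)) * Z^(nuF P Z g)) (Z^(-(nuF P Z g)) * g) :=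
    (cle_mul_left _).mpr (h.nu_le g)
  have e : Z^(-(nuF P Z g)) * Z^(nuF P Z g) = (1 : G) := by
    rw [← zpow_add, show -(nuF P Z g) + nuF P Z g = 0 by ring, zpow_zero]
  unfold rho
  rwa [e] at h2

theorem rho_spec2 (h : ConeCtx P Z) (g : G) : coneLt P (rho P Z g) Z := by
  have h2 : coneLt P (Z^(-(nuF P Z g)) * g) (Z^(-(nuF P Z g)) * Z^(nuF P Z g + 1)) :=
    (coneLt_mul_left _).mpr (h.nu_lt_succ g)
  have e : Z^(-(nuF P Z g)) * Z^(nuF P Z g + 1) = Z := by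
    rw [← zpow_add, show -(nuF P Z g) + (nuF P Z g + 1) = 1 by ring, zpow_one]
  unfold rho
  rwa [e] at h2

theorem rho_zpow_mul (h : ConeCtx P Z) (j : ℤ) (g : G) : rho P Z (Z^j * g) = rho P Z g := by
  unfold rho
  rw [h.nu_zpow_mul j g, ← mul_assoc, ← zpow_add,
    show -(j + nuF P Z g) + j = -(nuF P Z g) by ring]

theorem g_eq_rho (h : ConeCtx P Z) (g : G) : g = Z^(nuF P Z g) * rho P Z g := by
  unfold rho
  rw [← mul_assoc, ← zpow_add, show nuF P Z g + -(nuF P Z g) = 0 by ring, zpow_zero, one_mul]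

theorem rho_eq_iff (h : ConeCtx P Z) (g g' : G) :
    rho P Z g = rho P Z g' ↔ ∃ j : ℤ, g' = Z^j * g := by
  constructor
  · intro he
    refine ⟨nuF P Z g' - nuF P Z g, ?_⟩
    calc g' = Z^(nuF P Z g') * rho P Z g' := h.g_eq_rho g'
    _ = Z^(nuF P Z g') * rho P Z g := by rw [← he]
    _ = (Z^(nuF P Z g' - nuF P Z g) * Z^(nuF P Z g)) * rho P Z g := by
        rw [← zpow_add]
        congr 2
        ring
    _ = Z^(nuF P Z g' - nuF P Z g) * (Z^(nuF P Z g) * rho P Z g) := by rw [mul_assoc]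
    _ = Z^(nuF P Z g' - nuF P Z g) * g := by rw [← h.g_eq_rho g]
  · rintro ⟨j, rfl⟩
    rw [h.rho_zpow_mul]

end ConeCtx

/-- the wrapped order: compare representatives, break ties with the original order -/
def LL (P : Set G) (Z : G) (u v : G) : Prop :=
  coneLt P (rho P Z u) (rho P Z v) ∨ (rho P Z u = rho P Z v ∧ coneLt P u v)

/-- the wrapped circular ordering -/
noncomputable def cz (P : Set G) (Z : G) : G → G → G → ℤ := cyc (LL P Z)

namespace ConeCtx
variable {P : Set G} {Z : G}

theorem LL_stotal (h : ConeCtx P Z) : STotal (LL P Z) where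
  irrefl := by
    intro a
    rintro (h' | ⟨_, h'⟩) <;> exact coneLt_irrefl h.cone _ h'
  trans := by
    rintro a b c (h1 | ⟨e1, h1⟩) (h2 | ⟨e2, h2⟩)
    · exact Or.inl (coneLt_trans h.cone h1 h2)
    · exact Or.inl (e2 ▸ h1)
    · exact Or.inl (e1 ▸ h2)
    · exact Or.inr ⟨e1.trans e2, coneLt_trans h.cone h1 h2⟩
  total := by
    intro a b hab
    rcases eq_or_ne (rho P Z a) (rho P Z b) with he | hne
    · rcases coneLt_total h.cone hab with h' | h'
      · exact Or.inl (Or.inr ⟨he, h'⟩)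
      · exact Or.inr (Or.inr ⟨he.symm, h'⟩)
    · rcases coneLt_total h.cone hne with h' | h'
      · exact Or.inl (Or.inl h')
      · exact Or.inr (Or.inl h')

theorem LL_iff_interval (h : ConeCtx P Z) {u v : G}
    (hu1 : cle P 1 u) (hu2 : coneLt P u Z) (hv1 : cle P 1 v) (hv2 : coneLt P v Z) :
    LL P Z u v ↔ coneLt P u v := by
  unfold LL
  rw [h.rho_interval hu1 hu2, h.rho_interval hv1 hv2]
  constructor
  · rintro (h' | ⟨_, h'⟩) <;> exact h'
  · exact Or.inl

end ConeCtx
end Wrap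

section Wrap2
variable {G : Type*} [Group G] {P : Set G} {Z : G}

namespace ConeCtx

theorem mul_factor (h : ConeCtx P Z) (g u : G) :
    g * u = Z^(nuF P Z u) * (g * rho P Z u) := by
  conv_lhs => rw [h.g_eq_rho u]
  rw [← mul_assoc, ← h.zpow_comm (nuF P Z u) g, mul_assoc]

theorem rho_mul (h : ConeCtx P Z) (g u : G) :
    rho P Z (g * u) = rho P Z (g * rho P Z u) := by
  rw [h.mul_factor g u, h.rho_zpow_mul]

theorem rho_eq_mul_iff (h : ConeCtx P Z) (g u v : G) :
    rho P Z (g * u) = rho P Z (g * v) ↔ rho P Z u = rho P Z v := by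
  rw [h.rho_eq_iff, h.rho_eq_iff]
  constructor
  · rintro ⟨j, hj⟩
    refine ⟨j, mul_left_cancel (a := g) ?_⟩
    rw [hj, ← mul_assoc, h.zpow_comm j g, mul_assoc]
  · rintro ⟨j, rfl⟩
    exact ⟨j, by rw [← mul_assoc, ← h.zpow_comm j g, mul_assoc]⟩

theorem cz_left_inv (h : ConeCtx P Z) (g a b c : G) :
    cz P Z (g*a) (g*b) (g*c) = cz P Z a b c := by
  classical
  have hst := h.LL_stotal
  set ng := nuF P Z g with hng
  -- the cut set
  have hAlow : ∀ u : G, ¬ cle P (Z^(ng + 1)) (g * rho P Z u) →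
      nuF P Z (g * rho P Z u) = ng := by
    intro u hu
    have h1 : cle P (Z^ng) (g * rho P Z u) := by
      apply cle_trans h.cone (h.nu_le g)
      have h2 := (cle_mul_left g).mpr (h.rho_spec1 u)
      rwa [mul_one] at h2
    have h2 : coneLt P (g * rho P Z u) (Z^(ng + 1)) := by
      by_contra hc
      exact hu (cle_of_not_lt h.cone hc)
    exact h.nu_unique h1 h2
  have hAhigh : ∀ u : G, cle P (Z^(ng + 1)) (g * rho P Z u) →
      nuF P Z (g * rho P Z u) = ng + 1 := by
    intro u hu
    have s1 : coneLt P (g * rho P Z u) (g * Z) := (coneLt_mul_left g).mpr (h.rho_spec2 u)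
    have s2 : coneLt P (Z * g) (Z * Z^(ng + 1)) := (coneLt_mul_left Z).mpr (h.nu_lt_succ g)
    rw [h.cen g] at s2
    have e : Z * Z^(ng + 1) = Z^(ng + 1 + 1) := by
      have e2 : Z^(ng + 1 + 1) = Z^(1:ℤ) * Z^(ng + 1) := by
        rw [← zpow_add]; congr 1; ring
      rw [e2, zpow_one]
    rw [e] at s2
    exact h.nu_unique hu (coneLt_trans h.cone s1 s2)
  have hrho_low : ∀ u : G, ¬ cle P (Z^(ng + 1)) (g * rho P Z u) →
      rho P Z (g * u) = Z^(-(ng)) * (g * rho P Z u) := by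
    intro u hu
    rw [h.rho_mul g u,
      show rho P Z (g * rho P Z u) =
        Z ^ (-(nuF P Z (g * rho P Z u))) * (g * rho P Z u) from rfl,
      hAlow u hu]
  have hrho_high : ∀ u : G, cle P (Z^(ng + 1)) (g * rho P Z u) →
      rho P Z (g * u) = Z^(-(ng + 1)) * (g * rho P Z u) := by
    intro u hu
    rw [h.rho_mul g u,
      show rho P Z (g * rho P Z u) =
        Z ^ (-(nuF P Z (g * rho P Z u))) * (g * rho P Z u) from rfl,
      hAhigh u hu]
  -- cut set as a Set
  have main : cyc (fun u v => LL P Z (g*u) (g*v)) a b c = cyc (LL P Z) a b c := by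
    apply cyc_cut hst (U := {u : G | cle P (Z^(ng + 1)) (g * rho P Z u)})
    · -- final segment
      intro u v hu hl
      rcases hl with hl | ⟨he, _⟩
      · have h2 : coneLt P (g * rho P Z u) (g * rho P Z v) := (coneLt_mul_left g).mpr hl
        exact cle_of_lt (lt_of_le_of_lt' h.cone hu h2)
      · show cle P (Z^(ng + 1)) (g * rho P Z v)
        rw [← he]
        exact hu
    · -- both in
      intro u v hu hv
      unfold LL
      apply or_congr
      · rw [hrho_high u hu, hrho_high v hv, coneLt_mul_left, coneLt_mul_left]
      · exact and_congr (h.rho_eq_mul_iff g u v) (coneLt_mul_left g)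
    · -- both out
      intro u v hu hv
      unfold LL
      apply or_congr
      · rw [hrho_low u hu, hrho_low v hv, coneLt_mul_left, coneLt_mul_left]
      · exact and_congr (h.rho_eq_mul_iff g u v) (coneLt_mul_left g)
    · -- in, out : LL (g u) (g v) holds
      intro u v hu hv
      left
      rw [hrho_high u hu, hrho_low v hv]
      have s1 : coneLt P (Z^(-(ng + 1)) * (g * rho P Z u)) (Z^(-(ng + 1)) * (g * Z)) :=
        (coneLt_mul_left _).mpr ((coneLt_mul_left g).mpr (h.rho_spec2 u))
      have e1 : Z^(-(ng + 1)) * (g * Z) = Z^(-(ng)) * g := by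
        rw [← h.cen g, ← mul_assoc]
        have e2 : Z^(-(ng + 1)) * Z = Z^(-(ng)) := by
          have e3 : Z^(-(ng)) = Z^(-(ng+1)) * Z^(1:ℤ) := by
            rw [← zpow_add]; congr 1; ring
          rw [e3, zpow_one]
        rw [e2]
      rw [e1] at s1
      have s2 : cle P (Z^(-(ng)) * (g * 1)) (Z^(-(ng)) * (g * rho P Z v)) :=
        (cle_mul_left _).mpr ((cle_mul_left g).mpr (h.rho_spec1 v))
      rw [mul_one] at s2
      exact lt_of_lt_of_le' h.cone s1 s2
    · -- out, in : ¬ LL (g u) (g v)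
      intro u v hu hv
      have hlt : coneLt P (rho P Z (g * v)) (rho P Z (g * u)) := by
        rw [hrho_high v hv, hrho_low u hu]
        have s1 : coneLt P (Z^(-(ng + 1)) * (g * rho P Z v)) (Z^(-(ng + 1)) * (g * Z)) :=
          (coneLt_mul_left _).mpr ((coneLt_mul_left g).mpr (h.rho_spec2 v))
        have e1 : Z^(-(ng + 1)) * (g * Z) = Z^(-(ng)) * g := by
          rw [← h.cen g, ← mul_assoc]
          have e2 : Z^(-(ng + 1)) * Z = Z^(-(ng)) := by
            have e3 : Z^(-(ng)) = Z^(-(ng+1)) * Z^(1:ℤ) := by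
              rw [← zpow_add]; congr 1; ring
            rw [e3, zpow_one]
          rw [e2]
        rw [e1] at s1
        have s2 : cle P (Z^(-(ng)) * (g * 1)) (Z^(-(ng)) * (g * rho P Z u)) :=
          (cle_mul_left _).mpr ((cle_mul_left g).mpr (h.rho_spec1 u))
        rw [mul_one] at s2
        exact lt_of_lt_of_le' h.cone s1 s2
      rintro (hl | ⟨he, _⟩)
      · exact coneLt_asymm h.cone hlt hl
      · exact coneLt_ne h.cone hlt he.symm
  exact main

theorem cz_isCircOrd (h : ConeCtx P Z) : IsCircOrd (cz P Z) :=
  ⟨fun a b c => cyc_zero_iff h.LL_stotal a b c,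
   fun a b c => cyc_mem a b c,
   fun a b c d => cyc_cocycle h.LL_stotal a b c d,
   fun g a b c => h.cz_left_inv g a b c⟩

theorem circOfCone_eq_cyc (Q : Set G) : circOfCone Q = cyc (coneLt Q) := rfl

theorem cz_agree (h : ConeCtx P Z) {a b c : G}
    (ha1 : cle P 1 a) (ha2 : coneLt P a Z)
    (hb1 : cle P 1 b) (hb2 : coneLt P b Z)
    (hc1 : cle P 1 c) (hc2 : coneLt P c Z) :
    cz P Z a b c = circOfCone P a b c := by
  rw [circOfCone_eq_cyc]
  exact cyc_congr
    (h.LL_iff_interval ha1 ha2 hb1 hb2) (h.LL_iff_interval hb1 hb2 hc1 hc2)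
    (h.LL_iff_interval hc1 hc2 ha1 ha2) (h.LL_iff_interval hc1 hc2 hb1 hb2)
    (h.LL_iff_interval hb1 hb2 ha1 ha2) (h.LL_iff_interval ha1 ha2 hc1 hc2)

end ConeCtx

theorem circOfCone_pos {Q : Set G} {a b c : G} (h1 : coneLt Q a b) (h2 : coneLt Q b c) :
    circOfCone Q a b c = 1 := by
  classical
  unfold circOfCone
  rw [if_pos (Or.inl ⟨h1, h2⟩)]

theorem circOfCone_neg {Q : Set G} (hQ : IsPositiveCone Q) {a b c : G}
    (h1 : coneLt Q c b) (h2 : coneLt Q b a) : circOfCone Q a b c = -1 := by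
  classical
  have hc1 : ¬ ((coneLt Q a b ∧ coneLt Q b c) ∨ (coneLt Q b c ∧ coneLt Q c a) ∨
      (coneLt Q c a ∧ coneLt Q a b)) := by
    rintro (⟨x, y⟩ | ⟨x, y⟩ | ⟨x, y⟩)
    · exact coneLt_asymm hQ h2 x
    · exact coneLt_asymm hQ h1 x
    · exact coneLt_asymm hQ h2 y
  unfold circOfCone
  rw [if_neg hc1, if_pos (Or.inl ⟨h1, h2⟩)]

namespace ConeCtx

theorem cz_triple_pos (h : ConeCtx P Z) {u v : G}
    (hu : coneLt P 1 u) (huv : coneLt P u v) (hv : coneLt P v Z) :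
    cz P Z 1 u v = 1 := by
  classical
  have ru : rho P Z u = u := h.rho_interval (cle_of_lt hu) (coneLt_trans h.cone huv hv)
  have rv : rho P Z v = v := h.rho_interval (cle_of_lt (coneLt_trans h.cone hu huv)) hv
  have r1 : rho P Z 1 = 1 := h.rho_interval (cle_refl 1) h.lt_one_Z
  have l1 : LL P Z 1 u := Or.inl (by rw [r1, ru]; exact hu)
  have l2 : LL P Z u v := Or.inl (by rw [ru, rv]; exact huv)
  unfold cz cyc
  rw [if_pos (Or.inl ⟨l1, l2⟩)]

theorem rho_Z_self (h : ConeCtx P Z) : rho P Z Z = 1 := by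
  have hn : nuF P Z Z = 1 := by
    apply h.nu_unique
    · rw [zpow_one]; exact cle_refl Z
    · have := cone_zpow_lt h.cone h.pos (show (1:ℤ) < 1 + 1 by omega)
      rwa [zpow_one] at this
  unfold rho
  rw [hn]
  group

theorem cz_wrap_neg (h : ConeCtx P Z) {u : G} (hu1 : coneLt P 1 u) (hu2 : coneLt P u Z) :
    cz P Z 1 u Z = -1 := by
  classical
  have r1 : rho P Z 1 = 1 := h.rho_interval (cle_refl 1) h.lt_one_Z
  have rZ : rho P Z Z = 1 := h.rho_Z_self
  have ru : rho P Z u = u := h.rho_interval (cle_of_lt hu1) hu2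
  have l1 : LL P Z 1 Z := Or.inr ⟨by rw [r1, rZ], h.lt_one_Z⟩
  have l2 : LL P Z Z u := Or.inl (by rw [rZ, ru]; exact hu1)
  have nuZ : ¬ LL P Z u Z := by
    rintro (hl | ⟨he, _⟩)
    · rw [ru, rZ] at hl; exact coneLt_asymm h.cone hu1 hl
    · rw [ru, rZ] at he; exact (coneLt_ne h.cone hu1) he.symm
  have nZ1 : ¬ LL P Z Z 1 := by
    rintro (hl | ⟨_, hl⟩)
    · rw [rZ, r1] at hl; exact coneLt_irrefl h.cone _ hl
    · exact coneLt_asymm h.cone h.lt_one_Z hl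
  have hc1 : ¬ ((LL P Z 1 u ∧ LL P Z u Z) ∨ (LL P Z u Z ∧ LL P Z Z 1) ∨
      (LL P Z Z 1 ∧ LL P Z 1 u)) := by
    rintro (⟨x, y⟩ | ⟨x, y⟩ | ⟨x, y⟩)
    · exact nuZ y
    · exact nuZ x
    · exact nZ1 x
  unfold cz cyc
  rw [if_neg hc1, if_pos (Or.inr (Or.inr ⟨l1, l2⟩))]

theorem cz_not_secret (h : ConeCtx P Z) {w : G} {N : ℕ} (hN : 3 ≤ N) (hw : w^N = Z) :
    ¬ IsSecret (cz P Z) := by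
  have hw1 : coneLt P 1 w := by
    rcases eq_or_ne w 1 with rfl | hne
    · exfalso
      rw [one_pow] at hw
      exact h.ne_one hw.symm
    · rcases coneLt_total h.cone (Ne.symm hne) with h' | h'
      · exact h'
      · exfalso
        have h2 : coneLt P (w^N) (w^0) := cone_pow_lt_pow' h.cone h' (by omega)
        rw [pow_zero, hw] at h2
        exact coneLt_asymm h.cone h.lt_one_Z h2
  have v1 : cz P Z 1 w (w^2) = 1 := by
    apply h.cz_triple_pos hw1
    · have h2 := cone_pow_lt_pow h.cone hw1 (show 1 < 2 by omega)
      rwa [pow_one] at h2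
    · rw [← hw]
      exact cone_pow_lt_pow h.cone hw1 (by omega)
  have v2 : cz P Z 1 (w^(N-1)) Z = -1 := by
    apply h.cz_wrap_neg
    · have h2 := cone_pow_lt_pow h.cone hw1 (show 0 < N-1 by omega)
      rwa [pow_zero] at h2
    · rw [← hw]
      exact cone_pow_lt_pow h.cone hw1 (by omega)
  rintro ⟨Q, hQ, hEq⟩
  have e1 : circOfCone Q 1 w (w^2) = 1 := by rw [← hEq]; exact v1
  have e2 : circOfCone Q 1 (w^(N-1)) Z = -1 := by rw [← hEq]; exact v2
  have hne : w ≠ 1 := by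
    intro h'
    rw [h', one_pow] at hw
    exact h.ne_one hw.symm
  have hmem : w ∈ Q ∪ Q⁻¹ := by rw [hQ.2]; exact hne
  rcases hmem with hq | hq
  · have c1 : coneLt Q 1 (w^(N-1)) := by
      unfold coneLt
      rw [inv_one, one_mul]
      exact cone_pow_mem hQ hq _ (by omega)
    have c2 : coneLt Q (w^(N-1)) Z := by
      unfold coneLt
      have e : w^N = w^(N-1) * w := by
        rw [← pow_succ]
        congr 1
        omega
      rw [← hw, e, inv_mul_cancel_left]
      exact hq
    have h3 := circOfCone_pos c1 c2
    rw [h3] at e2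
    exact absurd e2 (by decide)
  · have hq' : w⁻¹ ∈ Q := Set.mem_inv.mp hq
    have c1 : coneLt Q (w^2) w := by
      unfold coneLt
      have e : (w^2)⁻¹ * w = w⁻¹ := by group
      rw [e]
      exact hq'
    have c2 : coneLt Q w 1 := by
      unfold coneLt
      rw [mul_one]
      exact hq'
    have h3 := circOfCone_neg hQ c1 c2
    rw [h3] at e1
    exact absurd e1 (by decide)

end ConeCtx
end Wrap2

section BraidAlg
variable {m : ℕ}

theorem comm_of_rel {H : Type*} [Group H] {x y : H} (h : x * y * x⁻¹ * y⁻¹ = 1) :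
    x * y = y * x := by
  calc x*y = x*y*x⁻¹*y⁻¹*(y*x) := by group
  _ = 1*(y*x) := by rw [h]
  _ = y*x := one_mul _

theorem braid_of_rel {H : Type*} [Group H] {x y : H} (h : x*y*x*(y*x*y)⁻¹ = 1) :
    x*y*x = y*x*y := by
  calc x*y*x = x*y*x*(y*x*y)⁻¹*(y*x*y) := by group
  _ = 1*(y*x*y) := by rw [h]
  _ = y*x*y := one_mul _

theorem braid_rel_one {r : FreeGroup (Fin m)} (hr : r ∈ braidRels m) :
    PresentedGroup.mk (braidRels m) r = 1 := by
  have h2 : r ∈ Subgroup.normalClosure (braidRels m) := Subgroup.subset_normalClosure hr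
  exact (QuotientGroup.eq_one_iff r).mpr h2

/-- the generators, indexed by ℕ (with value 1 out of range) -/
def sgen (m : ℕ) (j : ℕ) : PresentedGroup (braidRels m) :=
  if h : j < m then PresentedGroup.of ⟨j, h⟩ else 1

/-- partial products of the generators -/
def DD (m : ℕ) : ℕ → PresentedGroup (braidRels m)
  | 0 => 1
  | j+1 => DD m j * sgen m j

theorem sgen_comm {a b : ℕ} (hab : a + 2 ≤ b) :
    sgen m a * sgen m b = sgen m b * sgen m a := by
  unfold sgen
  split_ifs with h1 h2 h2
  · set i : Fin m := ⟨a, h1⟩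
    set j : Fin m := ⟨b, h2⟩
    have hr : FreeGroup.of i * FreeGroup.of j * (FreeGroup.of i)⁻¹ * (FreeGroup.of j)⁻¹ ∈
        braidRels m := Or.inl ⟨i, j, Or.inl (show a + 1 < b by omega), rfl⟩
    have h0 := braid_rel_one hr
    have e : PresentedGroup.mk (braidRels m)
        (FreeGroup.of i * FreeGroup.of j * (FreeGroup.of i)⁻¹ * (FreeGroup.of j)⁻¹) =
        PresentedGroup.of i * PresentedGroup.of j *
          (PresentedGroup.of i)⁻¹ * (PresentedGroup.of j)⁻¹ := by
      rw [map_mul, map_mul, map_mul, map_inv, map_inv]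
      rfl
    rw [e] at h0
    exact comm_of_rel h0
  · rw [one_mul, mul_one]
  · rw [one_mul, mul_one]
  · rfl

theorem sgen_braid {a : ℕ} (h : a + 1 < m) :
    sgen m a * sgen m (a+1) * sgen m a = sgen m (a+1) * sgen m a * sgen m (a+1) := by
  have ha : a < m := by omega
  unfold sgen
  rw [dif_pos ha, dif_pos h]
  set i : Fin m := ⟨a, ha⟩
  set j : Fin m := ⟨a+1, h⟩
  have hr : FreeGroup.of i * FreeGroup.of j * FreeGroup.of i *
      (FreeGroup.of j * FreeGroup.of i * FreeGroup.of j)⁻¹ ∈ braidRels m :=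
    Or.inr ⟨i, j, Or.inl rfl, rfl⟩
  have h0 := braid_rel_one hr
  have e : PresentedGroup.mk (braidRels m)
      (FreeGroup.of i * FreeGroup.of j * FreeGroup.of i *
        (FreeGroup.of j * FreeGroup.of i * FreeGroup.of j)⁻¹) =
      PresentedGroup.of i * PresentedGroup.of j * PresentedGroup.of i *
        (PresentedGroup.of j * PresentedGroup.of i * PresentedGroup.of j)⁻¹ := by
    rw [map_mul, map_mul, map_inv, map_mul, map_mul]
    rfl
  rw [e] at h0
  exact braid_of_rel h0

theorem DD_comm (j b : ℕ) : j + 1 ≤ b → DD m j * sgen m b = sgen m b * DD m j := by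
  induction j with
  | zero => intro _; simp [DD]
  | succ t ih =>
    intro h
    simp only [DD]
    rw [mul_assoc, sgen_comm (show t + 2 ≤ b by omega), ← mul_assoc, ih (by omega), mul_assoc]

theorem delta_conj {i : ℕ} (hi : i + 1 < m) :
    ∀ j, i + 2 ≤ j → DD m j * sgen m i = sgen m (i+1) * DD m j := by
  intro j hj
  induction j, hj using Nat.le_induction with
  | base =>
    have e : DD m (i+2) = DD m i * (sgen m i * sgen m (i+1)) := by
      simp only [DD]
      rw [mul_assoc]
    rw [e]
    rw [mul_assoc, sgen_braid hi]
    rw [show (sgen m (i+1) * sgen m i) * sgen m (i+1) =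
      sgen m (i+1) * (sgen m i * sgen m (i+1)) from by rw [mul_assoc]]
    rw [← mul_assoc, DD_comm i (i+1) (by omega), mul_assoc]
  | succ n hn ih =>
    have e : DD m (n+1) = DD m n * sgen m n := by simp only [DD]
    rw [e, mul_assoc, ← sgen_comm (show i + 2 ≤ n by omega), ← mul_assoc, ih, mul_assoc]

theorem delta_pow (i j : ℕ) (h : i + j + 1 ≤ m) :
    (DD m m)^j * sgen m i = sgen m (i+j) * (DD m m)^j := by
  induction j generalizing i with
  | zero => simp
  | succ t ih =>
    have h1 : DD m m * sgen m i = sgen m (i+1) * DD m m := delta_conj (by omega) m (by omega)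
    calc (DD m m)^(t+1) * sgen m i = (DD m m)^t * (DD m m * sgen m i) := by
          rw [pow_succ, mul_assoc]
    _ = (DD m m)^t * (sgen m (i+1) * DD m m) := by rw [h1]
    _ = ((DD m m)^t * sgen m (i+1)) * DD m m := by rw [mul_assoc]
    _ = (sgen m (i+1+t) * (DD m m)^t) * DD m m := by rw [ih (i+1) (by omega)]
    _ = sgen m (i+(t+1)) * (DD m m)^(t+1) := by
          rw [mul_assoc, ← pow_succ, show i+1+t = i+(t+1) by omega]

theorem gamma_pow : ∀ t, t ≤ m → (sgen m 0 * DD m m)^t = DD m t * (DD m m)^t := by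
  intro t
  induction t with
  | zero => intro _; simp [DD]
  | succ t ih =>
    intro h
    rw [pow_succ, ih (by omega)]
    rw [show DD m (t+1) = DD m t * sgen m t from by simp only [DD]]
    rw [mul_assoc (DD m t), mul_assoc (DD m t)]
    congr 1
    rw [← mul_assoc, delta_pow 0 t (by omega), zero_add, mul_assoc, ← pow_succ]

/-- the central element Δ² -/
def zB (m : ℕ) : PresentedGroup (braidRels m) := (DD m m)^(m+1)

theorem gamma_m : (sgen m 0 * DD m m)^m = zB m := by
  rw [gamma_pow m le_rfl]
  show DD m m * (DD m m)^m = (DD m m)^(m+1)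
  rw [← pow_succ']

theorem sgen_eq_of (i : Fin m) : sgen m (i : ℕ) = PresentedGroup.of i := by
  unfold sgen
  rw [dif_pos i.isLt]

theorem of_conj (i : Fin m) :
    PresentedGroup.of i = (DD m m)^(i:ℕ) * sgen m 0 * ((DD m m)^(i:ℕ))⁻¹ := by
  have e2 : sgen m (0 + (i:ℕ)) * (DD m m)^(i:ℕ) = (DD m m)^(i:ℕ) * sgen m 0 :=
    (delta_pow 0 (i:ℕ) (by omega)).symm
  rw [zero_add] at e2
  rw [← e2, mul_inv_cancel_right, sgen_eq_of]

theorem z_central (hm : 1 ≤ m) (g : PresentedGroup (braidRels m)) :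
    zB m * g = g * zB m := by
  have hδ : Commute (zB m) (DD m m) := (Commute.refl (DD m m)).pow_left (m+1)
  have hγ : Commute (zB m) (sgen m 0 * DD m m) := by
    rw [← gamma_m]
    exact (Commute.refl _).pow_left m
  have hs0 : Commute (zB m) (sgen m 0) := by
    have e : sgen m 0 = (sgen m 0 * DD m m) * (DD m m)⁻¹ := by group
    rw [e]
    exact hγ.mul_right hδ.inv_right
  have hsi : ∀ i : Fin m, Commute (zB m) (PresentedGroup.of i) := by
    intro i
    have hpow : Commute (zB m) ((DD m m)^(i:ℕ)) := hδ.pow_right _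
    rw [of_conj i]
    exact (hpow.mul_right hs0).mul_right hpow.inv_right
  show Commute (zB m) g
  refine PresentedGroup.induction_on g ?_
  intro w
  refine FreeGroup.induction_on
    (C := fun w => Commute (zB m) (PresentedGroup.mk (braidRels m) w)) w ?_ ?_ ?_ ?_
  · show Commute (zB m) (PresentedGroup.mk (braidRels m) 1)
    rw [map_one]
    exact Commute.one_right _
  · intro x
    exact hsi x
  · intro x hx
    show Commute (zB m) (PresentedGroup.mk (braidRels m) (FreeGroup.of x)⁻¹)
    rw [map_inv]
    exact Commute.inv_right hx
  · intro x y hx hy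
    show Commute (zB m) (PresentedGroup.mk (braidRels m) (x * y))
    rw [map_mul]
    exact Commute.mul_right hx hy

theorem z_ne_one (hm : 1 ≤ m) : zB m ≠ 1 := by
  have hrels : ∀ r ∈ braidRels m,
      FreeGroup.lift (fun _ : Fin m => Multiplicative.ofAdd (1:ℤ)) r = 1 := by
    rintro r (⟨i, j, hij, rfl⟩ | ⟨i, j, hij, rfl⟩) <;>
      · simp only [map_mul, map_inv, FreeGroup.lift_apply_of]
        group
  intro hz1
  have hz1' : (DD m m)^(m+1) = 1 := hz1
  have hφs : ∀ j, j < m →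
      PresentedGroup.toGroup hrels (sgen m j) = Multiplicative.ofAdd (1:ℤ) := by
    intro j hj
    unfold sgen
    rw [dif_pos hj]
    exact PresentedGroup.toGroup.of hrels
  have hφD : ∀ j, j ≤ m →
      PresentedGroup.toGroup hrels (DD m j) = Multiplicative.ofAdd (j:ℤ) := by
    intro j
    induction j with
    | zero => intro _; simp [DD]
    | succ t ih =>
      intro h
      rw [show DD m (t+1) = DD m t * sgen m t from by simp only [DD], map_mul,
        ih (by omega), hφs t (by omega), ← ofAdd_add,
        show ((t:ℤ) + 1) = ((t+1:ℕ):ℤ) from by push_cast; ring]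
  have h2 := congrArg (PresentedGroup.toGroup hrels) hz1'
  simp only [map_one, map_pow] at h2
  rw [hφD m le_rfl] at h2
  rw [← ofAdd_nsmul, ofAdd_eq_one, nsmul_eq_mul] at h2
  rcases mul_eq_zero.mp h2 with h3 | h3
  · have h4 : m + 1 = 0 := by exact_mod_cast h3
    omega
  · have h4 : m = 0 := by exact_mod_cast h3
    omega

end BraidAlg

section Bdd
variable {G : Type*} [Group G] {P : Set G} {z0 : G}

theorem lt_one_iff_mem {g : G} : coneLt P 1 g ↔ g ∈ P := by
  unfold coneLt
  rw [inv_one, one_mul]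

theorem cle_pow_mono (hP : IsPositiveCone P) (hz : z0 ∈ P) {s t : ℕ} (h : s ≤ t) :
    cle P (z0^s) (z0^t) := by
  rcases eq_or_lt_of_le h with rfl | h'
  · exact cle_refl _
  · exact cle_of_lt (cone_pow_lt_pow hP (lt_one_iff_mem.mpr hz) h')

theorem lt_of_not_le {a b : G} (hP : IsPositiveCone P) (h : ¬ cle P a b) : coneLt P b a := by
  rcases eq_or_ne b a with rfl | hne
  · exact absurd (cle_refl b) h
  · rcases coneLt_total hP hne with h' | h'
    · exact h'
    · exact absurd (cle_of_lt h') h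

/-- boundedness with respect to powers of a central positive element -/
def Bdd (P : Set G) (z0 : G) (g : G) : Prop :=
  (∃ s : ℕ, coneLt P g (z0^s)) ∧ (∃ s : ℕ, coneLt P g⁻¹ (z0^s))

theorem bdd_one (hP : IsPositiveCone P) (hz : z0 ∈ P) : Bdd P z0 1 := by
  constructor
  · refine ⟨1, ?_⟩
    unfold coneLt
    simp only [inv_one, one_mul, pow_one]
    exact hz
  · refine ⟨1, ?_⟩
    unfold coneLt
    simp only [inv_one, one_mul, pow_one]
    exact hz

theorem bdd_inv {g : G} (h : Bdd P z0 g) : Bdd P z0 g⁻¹ := by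
  refine ⟨h.2, ?_⟩
  rw [inv_inv]
  exact h.1

theorem bdd_mul_bound (hP : IsPositiveCone P) (hcen : ∀ x : G, z0 * x = x * z0)
    {a b : G} {s t : ℕ} (ha : coneLt P a (z0^s)) (hb : coneLt P b (z0^t)) :
    coneLt P (a*b) (z0^(t+s)) := by
  have h1 : coneLt P (a*b) (a*z0^t) := (coneLt_mul_left a).mpr hb
  have e : z0^t * a = a * z0^t := (show Commute z0 a from hcen a).pow_left t
  rw [← e] at h1
  have h2 : coneLt P (z0^t * a) (z0^t * z0^s) := (coneLt_mul_left _).mpr ha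
  rw [← pow_add] at h2
  exact coneLt_trans hP h1 h2

theorem bdd_mul (hP : IsPositiveCone P) (hcen : ∀ x : G, z0 * x = x * z0)
    {a b : G} (ha : Bdd P z0 a) (hb : Bdd P z0 b) : Bdd P z0 (a*b) := by
  obtain ⟨⟨s1, h1⟩, ⟨s2, h2⟩⟩ := ha
  obtain ⟨⟨t1, h3⟩, ⟨t2, h4⟩⟩ := hb
  constructor
  · exact ⟨t1 + s1, bdd_mul_bound hP hcen h1 h3⟩
  · refine ⟨s2 + t2, ?_⟩
    rw [mul_inv_rev]
    exact bdd_mul_bound hP hcen h4 h2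

theorem bdd_pow (hP : IsPositiveCone P) (hz : z0 ∈ P) (hcen : ∀ x : G, z0 * x = x * z0)
    {a : G} (ha : Bdd P z0 a) (n : ℕ) : Bdd P z0 (a^n) := by
  induction n with
  | zero =>
    rw [pow_zero]
    exact bdd_one hP hz
  | succ t ih =>
    rw [pow_succ]
    exact bdd_mul hP hcen ih ha

theorem pow_lower (hP : IsPositiveCone P) (hcen : ∀ x : G, z0 * x = x * z0)
    {g : G} {s : ℕ} (h : cle P (z0^s) g) :
    ∀ j : ℕ, 1 ≤ j → cle P (z0^(j*s)) (g^j) := by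
  intro j hj
  induction j with
  | zero => omega
  | succ t ih =>
    rcases Nat.lt_or_ge t 1 with ht | ht
    · have ht0 : t = 0 := by omega
      subst ht0
      show cle P (z0^(1*s)) (g^1)
      rw [one_mul, pow_one]
      exact h
    · have ih' := ih ht
      have h1 : cle P (g * z0^(t*s)) (g * g^t) := (cle_mul_left g).mpr ih'
      have e : z0^(t*s) * g = g * z0^(t*s) := (show Commute z0 g from hcen g).pow_left (t*s)
      rw [← e] at h1
      have h2 : cle P (z0^(t*s) * z0^s) (z0^(t*s) * g) := (cle_mul_left _).mpr h
      rw [← pow_add] at h2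
      have h3 : cle P (z0^(t*s+s)) (g*g^t) := cle_trans hP h2 h1
      rw [show (t+1)*s = t*s + s by ring, pow_succ' g t]
      exact h3

theorem bdd_root (hP : IsPositiveCone P) (hz : z0 ∈ P) (hcen : ∀ x : G, z0 * x = x * z0)
    {g : G} {q : ℕ} (hq : 1 ≤ q) (h : Bdd P z0 (g^q)) : Bdd P z0 g := by
  constructor
  · by_contra hc
    push_neg at hc
    obtain ⟨s, hs⟩ := h.1
    have h1 : cle P (z0^s) g := cle_of_not_lt hP (hc s)
    have h2 := pow_lower hP hcen h1 q hq
    have h3 : cle P (z0^s) (g^q) :=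
      cle_trans hP (cle_pow_mono hP hz (Nat.le_mul_of_pos_left s (by omega))) h2
    exact not_lt_of_le' hP h3 hs
  · by_contra hc
    push_neg at hc
    obtain ⟨s, hs⟩ := h.2
    rw [← inv_pow] at hs
    have h1 : cle P (z0^s) g⁻¹ := cle_of_not_lt hP (hc s)
    have h2 := pow_lower hP hcen h1 q hq
    have h3 : cle P (z0^s) ((g⁻¹)^q) :=
      cle_trans hP (cle_pow_mono hP hz (Nat.le_mul_of_pos_left s (by omega))) h2
    exact not_lt_of_le' hP h3 hs

end Bdd

section BraidCof
variable {m : ℕ}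

theorem braid_bdd_all (hm : 1 ≤ m) {P : Set (PresentedGroup (braidRels m))}
    (hP : IsPositiveCone P) {ζ : PresentedGroup (braidRels m)}
    (hζ : ζ = zB m ∨ ζ = (zB m)⁻¹) (hpos : ζ ∈ P)
    (g : PresentedGroup (braidRels m)) : Bdd P ζ g := by
  have hcen : ∀ x, ζ * x = x * ζ := by
    rcases hζ with rfl | rfl
    · exact z_central hm
    · intro x
      exact (show Commute (zB m) x from z_central hm x).inv_left
  have hbζ : Bdd P ζ ζ := by
    constructor
    · refine ⟨2, ?_⟩
      unfold coneLt
      rw [show ζ⁻¹ * ζ^2 = ζ from by group]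
      exact hpos
    · refine ⟨1, ?_⟩
      unfold coneLt
      rw [inv_inv, pow_one]
      exact hP.1 _ hpos _ hpos
  have hδ : Bdd P ζ (DD m m) := by
    rcases hζ with h | h
    · refine bdd_root hP hpos hcen (show 1 ≤ m + 1 by omega) ?_
      rw [show (DD m m)^(m+1) = zB m from rfl, ← h]
      exact hbζ
    · have h2 : Bdd P ζ ((DD m m)⁻¹) := by
        refine bdd_root hP hpos hcen (show 1 ≤ m + 1 by omega) ?_
        rw [inv_pow, show (DD m m)^(m+1) = zB m from rfl, ← h]
        exact hbζ
      have h3 := bdd_inv h2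
      rwa [inv_inv] at h3
  have hγ : Bdd P ζ (sgen m 0 * DD m m) := by
    rcases hζ with h | h
    · refine bdd_root hP hpos hcen hm ?_
      rw [gamma_m, ← h]
      exact hbζ
    · have h2 : Bdd P ζ ((sgen m 0 * DD m m)⁻¹) := by
        refine bdd_root hP hpos hcen hm ?_
        rw [inv_pow, gamma_m, ← h]
        exact hbζ
      have h3 := bdd_inv h2
      rwa [inv_inv] at h3
  have hs0 : Bdd P ζ (sgen m 0) := by
    rw [show sgen m 0 = (sgen m 0 * DD m m) * (DD m m)⁻¹ from by group]
    exact bdd_mul hP hcen hγ (bdd_inv hδ)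
  have hsi : ∀ i : Fin m, Bdd P ζ (PresentedGroup.of i) := by
    intro i
    rw [of_conj i]
    exact bdd_mul hP hcen
      (bdd_mul hP hcen (bdd_pow hP hpos hcen hδ _) hs0)
      (bdd_inv (bdd_pow hP hpos hcen hδ _))
  refine PresentedGroup.induction_on g ?_
  intro w
  refine FreeGroup.induction_on
    (C := fun w => Bdd P ζ (PresentedGroup.mk (braidRels m) w)) w ?_ ?_ ?_ ?_
  · show Bdd P ζ (PresentedGroup.mk (braidRels m) 1)
    rw [map_one]
    exact bdd_one hP hpos
  · intro x
    exact hsi x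
  · intro x hx
    show Bdd P ζ (PresentedGroup.mk (braidRels m) (FreeGroup.of x)⁻¹)
    rw [map_inv]
    exact bdd_inv hx
  · intro x y hx hy
    show Bdd P ζ (PresentedGroup.mk (braidRels m) (x * y))
    rw [map_mul]
    exact bdd_mul hP hcen hx hy

end BraidCof

section Master
variable {G : Type*} [Group G]

theorem dense_secret (P : Set G) (hP : IsPositiveCone P)
    (ζ w : G) (hcen : ∀ x : G, ζ * x = x * ζ) (hpos : ζ ∈ P)
    (hcof : ∀ g : G, ∃ s : ℕ, coneLt P g (ζ^s)) (n : ℕ) (hn : 2 ≤ n) (hw : w^n = ζ)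
    (d : CircOrd G) (hd : d.1 = circOfCone P) :
    d ∈ closure {e : CircOrd G | ¬ IsSecret e.1} := by
  have hctx : ∀ k : ℕ, ConeCtx P (ζ^(k+2)) := by
    intro k
    refine ⟨hP, ?_, ?_, ?_⟩
    · intro g
      exact (show Commute ζ g from hcen g).pow_left (k+2)
    · exact cone_pow_mem hP hpos _ (by omega)
    · intro g
      obtain ⟨s, hs⟩ := hcof g
      refine ⟨s, ?_⟩
      rw [← pow_mul]
      exact lt_of_lt_of_le' hP hs
        (cle_pow_mono hP hpos (Nat.le_mul_of_pos_left s (by omega)))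
  set F : ℕ → CircOrd G := fun k => ⟨cz P (ζ^(k+2)), (hctx k).cz_isCircOrd⟩ with hF
  have hgen : ∀ k : ℕ, F k ∈ {e : CircOrd G | ¬ IsSecret e.1} := by
    intro k
    show ¬ IsSecret (cz P (ζ^(k+2)))
    refine (hctx k).cz_not_secret (w := w) (N := n*(k+2)) ?_ ?_
    · have h2 : 2*(k+2) ≤ n*(k+2) := Nat.mul_le_mul_right _ hn
      omega
    · rw [pow_mul, hw]
  -- pointwise eventual agreement
  have hptwise : ∀ a b c : G, ∃ K : ℕ, ∀ k ≥ K,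
      cz P (ζ^(k+2)) a b c = circOfCone P a b c := by
    intro a b c
    have hmin : ∃ g0 : G, cle P g0 a ∧ cle P g0 b ∧ cle P g0 c := by
      by_cases h1 : cle P a b
      · by_cases h2 : cle P a c
        · exact ⟨a, cle_refl a, h1, h2⟩
        · refine ⟨c, cle_of_lt (lt_of_not_le hP h2), ?_, cle_refl c⟩
          exact cle_trans hP (cle_of_lt (lt_of_not_le hP h2)) h1
      · by_cases h2 : cle P b c
        · exact ⟨b, cle_of_lt (lt_of_not_le hP h1), cle_refl b, h2⟩
        · refine ⟨c, ?_, cle_of_lt (lt_of_not_le hP h2), cle_refl c⟩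
          exact cle_trans hP (cle_of_lt (lt_of_not_le hP h2))
            (cle_of_lt (lt_of_not_le hP h1))
    obtain ⟨g0, hga, hgb, hgc⟩ := hmin
    obtain ⟨sa, hsa⟩ := hcof (g0⁻¹ * a)
    obtain ⟨sb, hsb⟩ := hcof (g0⁻¹ * b)
    obtain ⟨sc, hsc⟩ := hcof (g0⁻¹ * c)
    refine ⟨sa + sb + sc, fun k hk => ?_⟩
    have hctxk := hctx k
    have key : ∀ x : G, ∀ s : ℕ, coneLt P x (ζ^s) → s ≤ k + 2 →
        coneLt P x (ζ^(k+2)) := by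
      intro x s hx hs
      exact lt_of_lt_of_le' hP hx (cle_pow_mono hP hpos hs)
    have hone : ∀ x : G, cle P g0 x → cle P 1 (g0⁻¹ * x) := by
      intro x hx
      have h2 := (cle_mul_left g0⁻¹).mpr hx
      rwa [inv_mul_cancel] at h2
    have e1 : cz P (ζ^(k+2)) a b c =
        cz P (ζ^(k+2)) (g0⁻¹*a) (g0⁻¹*b) (g0⁻¹*c) := by
      have h2 := hctxk.cz_left_inv g0⁻¹ a b c
      exact h2.symm
    have e2 : circOfCone P a b c = circOfCone P (g0⁻¹*a) (g0⁻¹*b) (g0⁻¹*c) := by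
      rw [ConeCtx.circOfCone_eq_cyc]
      have e3 : cyc (coneLt P) (g0⁻¹*a) (g0⁻¹*b) (g0⁻¹*c) =
          cyc (fun u v => coneLt P (g0⁻¹*u) (g0⁻¹*v)) a b c := rfl
      rw [e3]
      exact cyc_congr
        (coneLt_mul_left g0⁻¹).symm (coneLt_mul_left g0⁻¹).symm (coneLt_mul_left g0⁻¹).symm
        (coneLt_mul_left g0⁻¹).symm (coneLt_mul_left g0⁻¹).symm (coneLt_mul_left g0⁻¹).symm
    rw [e1, e2]
    exact hctxk.cz_agree (hone a hga) (key _ sa hsa (by omega))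
      (hone b hgb) (key _ sb hsb (by omega)) (hone c hgc) (key _ sc hsc (by omega))
  -- convergence
  have htend : Filter.Tendsto F Filter.atTop (nhds d) := by
    rw [tendsto_subtype_rng]
    rw [hd]
    rw [tendsto_pi_nhds]
    intro a
    rw [tendsto_pi_nhds]
    intro b
    rw [tendsto_pi_nhds]
    intro c
    obtain ⟨K, hK⟩ := hptwise a b c
    apply Filter.Tendsto.congr' ?_ (tendsto_const_nhds (x := circOfCone P a b c))
    rw [Filter.EventuallyEq, Filter.eventually_atTop]
    exact ⟨K, fun k hk => (hK k hk).symm⟩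
  exact mem_closure_of_tendsto htend (Filter.Eventually.of_forall hgen)

end Master

/-- Theorem 1.2(2): for `n ≥ 2`, the genuine circular orderings are dense in the space of
circular orderings of the braid group `B_n`. -/
theorem stmt19 (n : ℕ) (hn : 2 ≤ n) :
    Dense {d : CircOrd (BraidGroup n) | ¬ IsSecret d.1} := by
  intro d
  by_cases hs : IsSecret d.1
  · obtain ⟨P, hP, hd⟩ := hs
    have hm : 1 ≤ n - 1 := by omega
    have hz1 : zB (n-1) ≠ 1 := z_ne_one hm
    have hmem : zB (n-1) ∈ P ∪ P⁻¹ := by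
      rw [hP.2]
      exact hz1
    have hcen : ∀ g, zB (n-1) * g = g * zB (n-1) := z_central hm
    rcases hmem with hq | hq
    · refine dense_secret P hP (zB (n-1)) (DD (n-1) (n-1)) hcen hq ?_ ((n-1)+1)
        (by omega) rfl d hd
      intro g
      exact (braid_bdd_all hm hP (Or.inl rfl) hq g).1
    · have hq' : (zB (n-1))⁻¹ ∈ P := Set.mem_inv.mp hq
      have hcen' : ∀ g, (zB (n-1))⁻¹ * g = g * (zB (n-1))⁻¹ := by
        intro g
        exact (show Commute (zB (n-1)) g from hcen g).inv_left
      refine dense_secret P hP (zB (n-1))⁻¹ (DD (n-1) (n-1))⁻¹ hcen' hq' ?_ ((n-1)+1)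
        (by omega) (by rw [inv_pow]; rfl) d hd
      intro g
      exact (braid_bdd_all hm hP (Or.inr rfl) hq' g).1
  · exact subset_closure hs

end Paper
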